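/- Let G be a connected graph and let a ∈ ℝ^L have all components strictly positive with Γ·a = c·𝟙 for some c > 0; set N = κ + c. Suppose there exist vertices i0, i1, i2, i3 such that i1 ~ i0; i2 ~ i1, i2 is not adjacent to i0 and i2 ≠ i0; and i3 ~ i2, i3 is not adjacent to i0 and i3 ≠ i0. Then the critical point a is unstable: the Jacobian matrix (1/N²)·d(a)·Γ·( c·I − d(a)·Γ ) has a real eigenvalue that is strictly positive. -/

import Mathlib

open Finset Filter

/-- `auxN G κ a i = κ + ∑_{j ~ i} a_j`. -/
noncomputable def auxN {L : ℕ} (G : SimpleGraph (Fin L)) [DecidableRel G.Adj] (κ : ℝ)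
    (a : Fin L → ℝ) (i : Fin L) : ℝ :=
  κ + ∑ j ∈ G.neighborFinset i, a j

/-- The auxin transport vector field
`f_i(a) = D·∑_{k ~ i}(a_k − a_i) + T·∑_{k ~ i}(a_k·a_i/N_k(a) − a_i·a_k/N_i(a))`. -/
noncomputable def auxF {L : ℕ} (G : SimpleGraph (Fin L)) [DecidableRel G.Adj] (κ D T : ℝ)
    (a : Fin L → ℝ) (i : Fin L) : ℝ :=
  D * ∑ k ∈ G.neighborFinset i, (a k - a i) +
    T * ∑ k ∈ G.neighborFinset i,
      (a k * a i / auxN G κ a k - a i * a k / auxN G κ a i)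

/-- Sum over `Fin L` of a function vanishing off `{i0, i2, i3}`. -/
private lemma sum_three_aux {L : ℕ} {i0 i2 i3 : Fin L} (h20 : i0 ≠ i2) (h30 : i0 ≠ i3)
    (h23 : i2 ≠ i3) (f : Fin L → ℝ) (hf : ∀ i, i ≠ i0 → i ≠ i2 → i ≠ i3 → f i = 0) :
    ∑ i, f i = f i0 + f i2 + f i3 := by
  classical
  rw [← Finset.sum_subset (Finset.subset_univ ({i0, i2, i3} : Finset (Fin L)))]
  · rw [Finset.sum_insert (by simp [h20, h30]), Finset.sum_insert (by simp [h23]),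
      Finset.sum_singleton, add_assoc]
  · intro i _ hi
    simp only [Finset.mem_insert, Finset.mem_singleton, not_or] at hi
    exact hf i hi.1 hi.2.1 hi.2.2

/-- Instability criterion. If a connected graph contains a path
`i0 ~ i1 ~ i2 ~ i3` with `i2, i3` neither adjacent nor equal to `i0`, then any positive
critical point `a` with `Γ·a = c·𝟙` is unstable: the Jacobian
`(1/N²)·d(a)·Γ·(c·I − d(a)·Γ)` with `N = κ + c` has a strictly positive real eigenvalue. -/
theorem auxin_instability_path {L : ℕ} (hL : 1 ≤ L) (G : SimpleGraph (Fin L))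
    [DecidableRel G.Adj] (hG : G.Connected) (κ : ℝ) (hκ : 0 < κ)
    (a : Fin L → ℝ) (ha : ∀ i, 0 < a i)
    (c : ℝ) (hc : 0 < c) (hca : (G.adjMatrix ℝ).mulVec a = fun _ => c)
    (N : ℝ) (hN : N = κ + c)
    (i0 i1 i2 i3 : Fin L)
    (h1 : G.Adj i0 i1)
    (h2 : G.Adj i1 i2) (h2' : ¬ G.Adj i0 i2) (h2'' : i2 ≠ i0)
    (h3 : G.Adj i2 i3) (h3' : ¬ G.Adj i0 i3) (h3'' : i3 ≠ i0) :
    ∃ r : ℝ, 0 < r ∧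
      Module.End.HasEigenvalue
        (Matrix.mulVecLin
          ((1 / N ^ 2) •
            (Matrix.diagonal a * G.adjMatrix ℝ *
              (c • (1 : Matrix (Fin L) (Fin L) ℝ) -
                Matrix.diagonal a * G.adjMatrix ℝ)))) r := by
  classical
  open Matrix in
  have hN0 : 0 < N := by rw [hN]; linarith
  have hN2 : (0:ℝ) < N ^ 2 := by positivity
  set sa : Fin L → ℝ := fun i => Real.sqrt (a i) with hsa_def
  have hsa_pos : ∀ i, 0 < sa i := fun i => Real.sqrt_pos.mpr (ha i)
  have hsa_sq : ∀ i, sa i * sa i = a i := fun i => Real.mul_self_sqrt (ha i).le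
  have hrow : ∀ i, ∑ j, (G.adjMatrix ℝ) i j * a j = c := by
    intro i
    have := congrFun hca i
    simpa [Matrix.mulVec, dotProduct] using this
  have hΓ01 : ∀ i j, (G.adjMatrix ℝ) i j = 0 ∨ (G.adjMatrix ℝ) i j = 1 := by
    intro i j; by_cases h : G.Adj i j <;> simp [h]
  have hΓnn : ∀ i j, 0 ≤ (G.adjMatrix ℝ) i j := by
    intro i j; rcases hΓ01 i j with h | h <;> rw [h] <;> norm_num
  have hΓsymm : ∀ i j, (G.adjMatrix ℝ) i j = (G.adjMatrix ℝ) j i := by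
    intro i j; simp [SimpleGraph.adjMatrix_apply, G.adj_comm]
  set S : Matrix (Fin L) (Fin L) ℝ :=
    Matrix.of (fun i j => sa i * (G.adjMatrix ℝ) i j * sa j) with hS_def
  have hSapp : ∀ i j, S i j = sa i * (G.adjMatrix ℝ) i j * sa j := fun i j => rfl
  have hS : S.IsHermitian := by
    ext i j
    simp only [Matrix.conjTranspose_apply, hSapp, star_trivial]
    rw [hΓsymm j i]; ring
  have hSmul : ∀ (x : Fin L → ℝ) i,
      (S *ᵥ x) i = sa i * ∑ j, (G.adjMatrix ℝ) i j * (sa j * x j) := by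
    intro x i
    show ∑ j, S i j * x j = _
    rw [Finset.mul_sum]
    exact Finset.sum_congr rfl fun j _ => by rw [hSapp]; ring
  have hSv : S *ᵥ sa = c • sa := by
    funext i
    rw [hSmul]
    have h1 : ∑ j, (G.adjMatrix ℝ) i j * (sa j * sa j) = c := by
      simp only [hsa_sq]; exact hrow i
    rw [h1]
    simp [mul_comm]
  -- quadratic form upper bound
  have hQle : ∀ x : Fin L → ℝ, x ⬝ᵥ (S *ᵥ x) ≤ c * (x ⬝ᵥ x) := by
    intro x
    have key : ∀ i j, 2 * (x i * (S i j * x j))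
        ≤ (G.adjMatrix ℝ) i j * ((sa j * x i)^2 + (sa i * x j)^2) := by
      intro i j
      rw [hSapp]
      rcases hΓ01 i j with h | h
      · rw [h]; ring_nf; nlinarith [sq_nonneg (sa j * x i), sq_nonneg (sa i * x j)]
      · rw [h]; nlinarith [sq_nonneg (sa j * x i - sa i * x j)]
    have A1 : ∑ i, ∑ j, (G.adjMatrix ℝ) i j * (sa j * x i)^2 = c * (x ⬝ᵥ x) := by
      show _ = c * ∑ i, x i * x i
      rw [Finset.mul_sum]
      refine Finset.sum_congr rfl fun i _ => ?_
      have h2 : ∀ j, (G.adjMatrix ℝ) i j * (sa j * x i)^2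
          = ((G.adjMatrix ℝ) i j * a j) * (x i * x i) := by
        intro j; rw [← hsa_sq j]; ring
      rw [Finset.sum_congr rfl fun j _ => h2 j, ← Finset.sum_mul, hrow i]
    have A2 : ∑ i, ∑ j, (G.adjMatrix ℝ) i j * (sa i * x j)^2 = c * (x ⬝ᵥ x) := by
      rw [Finset.sum_comm]
      show _ = c * ∑ i, x i * x i
      rw [Finset.mul_sum]
      refine Finset.sum_congr rfl fun j _ => ?_
      have h2 : ∀ i, (G.adjMatrix ℝ) i j * (sa i * x j)^2
          = ((G.adjMatrix ℝ) j i * a i) * (x j * x j) := by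
        intro i; rw [hΓsymm j i, ← hsa_sq i]; ring
      rw [Finset.sum_congr rfl fun i _ => h2 i, ← Finset.sum_mul, hrow j]
    have e1 : x ⬝ᵥ (S *ᵥ x) = ∑ i, ∑ j, x i * (S i j * x j) := by
      simp only [dotProduct, Matrix.mulVec, Finset.mul_sum]
    have hstep : 2 * (x ⬝ᵥ (S *ᵥ x)) ≤ 2 * (c * (x ⬝ᵥ x)) := by
      rw [e1]
      calc 2 * ∑ i, ∑ j, x i * (S i j * x j)
          = ∑ i, ∑ j, 2 * (x i * (S i j * x j)) := by
            rw [Finset.mul_sum]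
            exact Finset.sum_congr rfl fun i _ => Finset.mul_sum _ _ _
        _ ≤ ∑ i, ∑ j, (G.adjMatrix ℝ) i j * ((sa j * x i)^2 + (sa i * x j)^2) := by
            exact Finset.sum_le_sum fun i _ => Finset.sum_le_sum fun j _ => key i j
        _ = (∑ i, ∑ j, (G.adjMatrix ℝ) i j * (sa j * x i)^2)
            + ∑ i, ∑ j, (G.adjMatrix ℝ) i j * (sa i * x j)^2 := by
            rw [← Finset.sum_add_distrib]
            refine Finset.sum_congr rfl fun i _ => ?_
            rw [← Finset.sum_add_distrib]
            exact Finset.sum_congr rfl fun j _ => by ring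
        _ = 2 * (c * (x ⬝ᵥ x)) := by rw [A1, A2]; ring
    linarith
  -- simplicity of the top eigenvalue
  have hne : (Finset.univ : Finset (Fin L)).Nonempty := ⟨⟨0, hL⟩, Finset.mem_univ _⟩
  have hsimple : ∀ w : Fin L → ℝ, S *ᵥ w = c • w → sa ⬝ᵥ w = 0 → w = 0 := by
    intro w hw hvw
    set z : Fin L → ℝ := fun i => w i / sa i with hz_def
    have hwz : ∀ i, w i = sa i * z i := by
      intro i
      rw [hz_def]
      field_simp
      rw [mul_div_assoc, div_self (hsa_pos i).ne', mul_one]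
    have hz : ∀ i, ∑ j, (G.adjMatrix ℝ) i j * (a j * z j) = c * z i := by
      intro i
      have h1 := congrFun hw i
      rw [hSmul] at h1
      have h2 : ∑ j, (G.adjMatrix ℝ) i j * (sa j * w j)
          = ∑ j, (G.adjMatrix ℝ) i j * (a j * z j) :=
        Finset.sum_congr rfl fun j _ => by rw [hwz j, ← hsa_sq j]; ring
      rw [h2] at h1
      have h3 : (c • w) i = sa i * (c * z i) := by
        simp only [Pi.smul_apply, smul_eq_mul]
        rw [hwz i]; ring
      rw [h3] at h1
      exact mul_left_cancel₀ (hsa_pos i).ne' h1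
    obtain ⟨i₀, -, hmax⟩ := Finset.exists_max_image Finset.univ z hne
    set t := z i₀ with ht_def
    have hstep : ∀ i, z i = t → ∀ j, G.Adj i j → z j = t := by
      intro i hi j hij
      have h0 : ∑ j', (G.adjMatrix ℝ) i j' * (a j' * (t - z j')) = 0 := by
        have e : ∑ j', (G.adjMatrix ℝ) i j' * (a j' * (t - z j'))
            = (∑ j', (G.adjMatrix ℝ) i j' * a j') * t
              - ∑ j', (G.adjMatrix ℝ) i j' * (a j' * z j') := by
          rw [Finset.sum_mul, ← Finset.sum_sub_distrib]
          exact Finset.sum_congr rfl fun _ _ => by ring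
        rw [e, hrow i, hz i, hi]; ring
      have hnn : ∀ j' ∈ Finset.univ, 0 ≤ (G.adjMatrix ℝ) i j' * (a j' * (t - z j')) := by
        intro j' _
        have h4 : z j' ≤ t := hmax j' (Finset.mem_univ _)
        exact mul_nonneg (hΓnn i j') (mul_nonneg (ha j').le (by linarith))
      have hj := (Finset.sum_eq_zero_iff_of_nonneg hnn).mp h0 j (Finset.mem_univ j)
      rw [SimpleGraph.adjMatrix_apply, if_pos hij, one_mul] at hj
      rcases mul_eq_zero.mp hj with h | h
      · exact absurd h (ha j).ne'
      · linarith
    have hwalk : ∀ (p q : Fin L) (w : G.Walk p q), z p = t → z q = t := by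
      intro p q w
      induction w with
      | nil => exact fun h => h
      | cons hadj _ ih => exact fun hu => ih (hstep _ hu _ hadj)
    have hall : ∀ j, z j = t := fun j => hwalk i₀ j (hG.preconnected i₀ j).some rfl
    have hsum : sa ⬝ᵥ w = t * ∑ i, a i := by
      show ∑ i, sa i * w i = _
      rw [Finset.mul_sum]
      exact Finset.sum_congr rfl fun i _ => by rw [hwz i, hall i, ← hsa_sq i]; ring
    have hpos : 0 < ∑ i, a i := Finset.sum_pos (fun i _ => ha i) hne
    have ht0 : t = 0 := by
      rw [hsum] at hvw
      rcases mul_eq_zero.mp hvw with h | h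
      · exact h
      · exact absurd h hpos.ne'
    funext i
    rw [hwz i, hall i, ht0, mul_zero]
    simp
  -- eigen-structure
  set μ : Fin L → ℝ := hS.eigenvalues with hμ_def
  set u : Fin L → Fin L → ℝ := fun k => ⇑(hS.eigenvectorBasis k) with hu_def
  have hmulu : ∀ k, S *ᵥ u k = μ k • u k := fun k => hS.mulVec_eigenvectorBasis k
  have hdot : ∀ j k, u j ⬝ᵥ u k = if j = k then 1 else 0 := by
    intro j k
    have := orthonormal_iff_ite.mp (hS.eigenvectorBasis).orthonormal j k
    simpa [PiLp.inner_apply, RCLike.inner_apply, conj_trivial, dotProduct, hu_def, mul_comm] using this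
  have hrepr : ∀ x : Fin L → ℝ, ∑ k, (u k ⬝ᵥ x) • u k = x := by
    intro x
    have h := (hS.eigenvectorBasis).sum_repr' (WithLp.toLp 2 x)
    have h2 : ∀ k, (inner ℝ (hS.eigenvectorBasis k) (WithLp.toLp 2 x) : ℝ)
        = u k ⬝ᵥ x := by
      intro k
      simp [PiLp.inner_apply, RCLike.inner_apply, conj_trivial, dotProduct, hu_def, mul_comm]
    simp_rw [h2] at h
    have h3 := congrArg WithLp.ofLp h
    simpa [hu_def] using h3
  have hμc : ∀ k, μ k ≤ c := by
    intro k
    have hq1 := hQle (u k)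
    have hq2 : u k ⬝ᵥ u k = 1 := by rw [hdot k k, if_pos rfl]
    rw [hmulu k, dotProduct_smul, smul_eq_mul, hq2, mul_one] at hq1
    linarith
  -- test vector
  have hd02 : i0 ≠ i2 := Ne.symm h2''
  have hd03 : i0 ≠ i3 := Ne.symm h3''
  have hd23 : i2 ≠ i3 := h3.ne
  set x : Fin L → ℝ := fun i => if i = i2 then 1 else if i = i3 then 1
      else if i = i0 then -((sa i2 + sa i3) / sa i0) else 0 with hx_def
  have hx2 : x i2 = 1 := by simp [hx_def]
  have hx3 : x i3 = 1 := by simp [hx_def, hd23.symm]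
  have hx0 : x i0 = -((sa i2 + sa i3) / sa i0) := by simp [hx_def, hd02, hd03]
  have hxe : ∀ i, i ≠ i0 → i ≠ i2 → i ≠ i3 → x i = 0 := by
    intro i a b cc; simp [hx_def, a, b, cc]
  have hvx : sa ⬝ᵥ x = 0 := by
    have h := sum_three_aux hd02 hd03 hd23 (fun i => sa i * x i)
      (fun i h0 h22 h33 => by show sa i * x i = 0; rw [hxe i h0 h22 h33, mul_zero])
    show ∑ i, sa i * x i = 0
    rw [h]
    show sa i0 * x i0 + sa i2 * x i2 + sa i3 * x i3 = 0
    rw [hx0, hx2, hx3]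
    field_simp
    rw [mul_comm, mul_div_assoc, div_self (hsa_pos i0).ne']
    ring
  have hn20 : ¬ G.Adj i2 i0 := fun h => h2' h.symm
  have hn30 : ¬ G.Adj i3 i0 := fun h => h3' h.symm
  have hQx : x ⬝ᵥ (S *ᵥ x) = 2 * (sa i2 * sa i3) := by
    have hsx : ∀ i, (S *ᵥ x) i = S i i0 * x i0 + S i i2 * x i2 + S i i3 * x i3 := by
      intro i
      show ∑ j, S i j * x j = _
      rw [sum_three_aux hd02 hd03 hd23 (fun j => S i j * x j)
        (fun j a b cc => by show S i j * x j = 0; rw [hxe j a b cc, mul_zero])]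
    have h := sum_three_aux hd02 hd03 hd23 (fun i => x i * (S *ᵥ x) i)
      (fun i a b cc => by show x i * (S *ᵥ x) i = 0; rw [hxe i a b cc, zero_mul])
    show ∑ i, x i * (S *ᵥ x) i = _
    rw [h]
    show x i0 * (S *ᵥ x) i0 + x i2 * (S *ᵥ x) i2 + x i3 * (S *ᵥ x) i3 = _
    rw [hsx, hsx, hsx, hx0, hx2, hx3]
    simp only [hSapp, SimpleGraph.adjMatrix_apply, if_pos h3, if_pos h3.symm,
      if_neg h2', if_neg h3', if_neg hn20, if_neg hn30,
      if_neg (G.loopless.irrefl i0), if_neg (G.loopless.irrefl i2), if_neg (G.loopless.irrefl i3)]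
    ring
  have hQxpos : 0 < x ⬝ᵥ (S *ᵥ x) := by
    rw [hQx]
    have := hsa_pos i2
    have := hsa_pos i3
    positivity
  -- spectral decomposition of the quadratic form
  have hdotsum : ∀ (y : Fin L → ℝ) (w : Fin L → Fin L → ℝ),
      y ⬝ᵥ (∑ k, w k) = ∑ k, y ⬝ᵥ w k := by
    intro y w
    show ∑ i, y i * (∑ k, w k) i = _
    simp only [Finset.sum_apply, Finset.mul_sum]
    exact Finset.sum_comm
  have hdecomp : x ⬝ᵥ (S *ᵥ x) = ∑ k, μ k * (u k ⬝ᵥ x)^2 := by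
    have h1 : S *ᵥ x = ∑ k, ((u k ⬝ᵥ x) * μ k) • u k := by
      conv_lhs => rw [← hrepr x]
      have h2 := map_sum (Matrix.mulVecLin S) (fun k => (u k ⬝ᵥ x) • u k) Finset.univ
      simp only [Matrix.mulVecLin_apply] at h2
      rw [h2]
      refine Finset.sum_congr rfl fun k _ => ?_
      rw [Matrix.mulVec_smul, hmulu k, smul_smul]
    rw [h1, hdotsum]
    refine Finset.sum_congr rfl fun k _ => ?_
    rw [dotProduct_smul, smul_eq_mul, dotProduct_comm]
    ring
  -- existence of an eigenvalue in (0, c)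
  have hex : ∃ k, 0 < μ k ∧ μ k < c := by
    by_contra hcon
    push_neg at hcon
    have hterm : ∀ k, μ k * (u k ⬝ᵥ x)^2 ≤ 0 := by
      intro k
      rcases le_or_gt (μ k) 0 with h | h
      · exact mul_nonpos_of_nonpos_of_nonneg h (sq_nonneg _)
      · have hkc : μ k = c := le_antisymm (hμc k) (hcon k h)
        have hsasa : 0 < sa ⬝ᵥ sa := by
          have : sa ⬝ᵥ sa = ∑ i, sa i * sa i := rfl
          rw [this]
          exact Finset.sum_pos (fun i _ => mul_pos (hsa_pos i) (hsa_pos i)) hne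
        set τ : ℝ := (sa ⬝ᵥ u k) / (sa ⬝ᵥ sa) with hτ_def
        have hw0 : u k - τ • sa = 0 := by
          apply hsimple
          · rw [Matrix.mulVec_sub, Matrix.mulVec_smul, hmulu k, hkc, hSv]
            funext i
            simp only [Pi.sub_apply, Pi.smul_apply, smul_eq_mul]
            ring
          · rw [dotProduct_sub, dotProduct_smul, smul_eq_mul, hτ_def]
            field_simp
            ring
        have huk : u k = τ • sa := by rwa [sub_eq_zero] at hw0
        have hzero : u k ⬝ᵥ x = 0 := by
          rw [huk, smul_dotProduct, hvx, smul_zero]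
        rw [hzero]
        simp
    have : x ⬝ᵥ (S *ᵥ x) ≤ 0 := by
      rw [hdecomp]
      exact Finset.sum_nonpos fun k _ => hterm k
    linarith
  obtain ⟨k, hk1, hk2⟩ := hex
  -- the eigenvector of the Jacobian
  set w : Fin L → ℝ := fun i => sa i * u k i with hw_def
  have hwne : w ≠ 0 := by
    intro hw0
    have h2 : u k ⬝ᵥ u k = 1 := by rw [hdot k k, if_pos rfl]
    have h3 : u k = 0 := by
      funext i
      have := congrFun hw0 i
      simp only [hw_def, Pi.zero_apply] at this ⊢
      rcases mul_eq_zero.mp this with h | h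
      · exact absurd h (hsa_pos i).ne'
      · exact h
    rw [h3] at h2
    simp [dotProduct] at h2
  set B : Matrix (Fin L) (Fin L) ℝ := Matrix.diagonal a * G.adjMatrix ℝ with hB_def
  have hBw : B *ᵥ w = μ k • w := by
    funext i
    have hSu := congrFun (hmulu k) i
    rw [hSmul] at hSu
    have hBapp : ∀ j, B i j = a i * (G.adjMatrix ℝ) i j := by
      intro j; rw [hB_def, Matrix.diagonal_mul]
    have e1 : (B *ᵥ w) i = a i * ∑ j, (G.adjMatrix ℝ) i j * (sa j * u k j) := by
      show ∑ j, B i j * w j = _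
      rw [Finset.mul_sum]
      exact Finset.sum_congr rfl fun j _ => by rw [hBapp j, hw_def]; ring
    rw [e1]
    have e2 : a i * ∑ j, (G.adjMatrix ℝ) i j * (sa j * u k j)
        = sa i * (sa i * ∑ j, (G.adjMatrix ℝ) i j * (sa j * u k j)) := by
      rw [← hsa_sq i]; ring
    rw [e2, hSu]
    simp only [Pi.smul_apply, smul_eq_mul, hw_def]
    ring
  set r : ℝ := μ k * (c - μ k) / N ^ 2 with hr_def
  have hr_pos : 0 < r := by
    rw [hr_def]
    have : 0 < c - μ k := by linarith
    positivity
  refine ⟨r, hr_pos, ?_⟩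
  have hJw : ((1 / N ^ 2) • (B * (c • (1 : Matrix (Fin L) (Fin L) ℝ) - B))) *ᵥ w
      = r • w := by
    rw [Matrix.smul_mulVec, ← Matrix.mulVec_mulVec]
    have e1 : (c • (1 : Matrix (Fin L) (Fin L) ℝ) - B) *ᵥ w = (c - μ k) • w := by
      rw [Matrix.sub_mulVec, Matrix.smul_mulVec, Matrix.one_mulVec, hBw]
      funext i
      simp only [Pi.sub_apply, Pi.smul_apply, smul_eq_mul]
      ring
    rw [e1, Matrix.mulVec_smul, hBw]
    funext i
    simp only [Pi.smul_apply, smul_eq_mul, hr_def]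
    field_simp
  have hev : Module.End.HasEigenvector
      (Matrix.mulVecLin ((1 / N ^ 2) • (B * (c • (1 : Matrix (Fin L) (Fin L) ℝ) - B)))) r w :=
    ⟨Module.End.mem_eigenspace_iff.mpr (by rw [Matrix.mulVecLin_apply]; exact hJw), hwne⟩
  exact Module.End.hasEigenvalue_of_hasEigenvector hev
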